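/- Tightness of the benchmark: under the assumptions that U returns the true free space when consistent with it, the optimal cost-to-go c̃*_U from x₀ with initial perception P(F_true, x₀) equals the benchmark cost c̃*(F_true, x₀, Goal). -/

import Mathlib

/-- The forward perception map `F^U`: `FU AB [] = AB` and each action unions
in the perception of the guessed environment at the action's endpoint. -/
def FU {Point Traj : Type*} (P₁ P₂ : Set Point → Point → Set Point)
    (U : Set Point × Set Point → Set Point) (endp : Traj → Point) :
    Set Point × Set Point → List Traj → Set Point × Set Point
  | AB, [] => AB
  | AB, σ :: s => FU P₁ P₂ U endp
      (AB.1 ∪ P₁ (U AB) (endp σ), AB.2 ∪ P₂ (U AB) (endp σ)) s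

lemma FU_append {Point Traj : Type*} (P₁ P₂ : Set Point → Point → Set Point)
    (U : Set Point × Set Point → Set Point) (endp : Traj → Point)
    (AB : Set Point × Set Point) (l₁ l₂ : List Traj) :
    FU P₁ P₂ U endp AB (l₁ ++ l₂) = FU P₁ P₂ U endp (FU P₁ P₂ U endp AB l₁) l₂ := by
  induction l₁ generalizing AB with
  | nil => rfl
  | cons σ s ih => simp [FU, ih]

lemma FU_key {Point Traj : Type*} (P₁ P₂ : Set Point → Point → Set Point)
    (U : Set Point × Set Point → Set Point) (endp : Traj → Point)
    (Ftrue : Set Point) (x₀ : Point)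
    (hU : ∀ S : Set Point, S.Nonempty →
      U (⋃ x ∈ S, P₁ Ftrue x, ⋃ x ∈ S, P₂ Ftrue x) = Ftrue)
    (σ : ℕ → Traj) (m : ℕ) :
    FU P₁ P₂ U endp (P₁ Ftrue x₀, P₂ Ftrue x₀)
      ((List.range m).map fun j => σ (j + 1)) =
    (⋃ j ∈ Finset.range (m + 1), P₁ Ftrue (if j = 0 then x₀ else endp (σ j)),
     ⋃ j ∈ Finset.range (m + 1), P₂ Ftrue (if j = 0 then x₀ else endp (σ j))) := by
  set g : ℕ → Point := fun j => if j = 0 then x₀ else endp (σ j) with hg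
  induction m with
  | zero =>
      simp [FU]
  | succ m ih =>
      rw [List.range_succ, List.map_append, FU_append, ih]
      have hS : ∀ Q : Set Point → Point → Set Point,
          (⋃ j ∈ Finset.range (m + 1), Q Ftrue (g j)) =
          ⋃ x ∈ g '' (↑(Finset.range (m + 1)) : Set ℕ), Q Ftrue x := by
        intro Q
        rw [Set.biUnion_image]
        simp
      have hUeq : U (⋃ j ∈ Finset.range (m + 1), P₁ Ftrue (g j),
          ⋃ j ∈ Finset.range (m + 1), P₂ Ftrue (g j)) = Ftrue := by
        rw [hS P₁, hS P₂]
        exact hU _ ⟨g 0, ⟨0, by simp, rfl⟩⟩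
      simp only [hg] at hUeq
      simp only [List.map_cons, List.map_nil, FU, hUeq]
      have hr : Finset.range (m + 2) = insert (m + 1) (Finset.range (m + 1)) := by
        rw [Finset.range_add_one]
      refine congrArg₂ Prod.mk ?_ ?_ <;>
      · rw [hr, Finset.set_biUnion_insert]
        simp [Set.union_comm]

theorem stmt_8 {Point Traj : Type*}
    (A : Point → Set Traj) (rng : Traj → Set Point) (endp : Traj → Point)
    (c : Traj → ENNReal)
    (P₁ P₂ : Set Point → Point → Set Point)
    (U : Set Point × Set Point → Set Point)
    (ICS : Set Point → Set Point)
    (Ftrue Goal : Set Point) (x₀ : Point)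
    (hU : ∀ S : Set Point, S.Nonempty →
      U (⋃ x ∈ S, P₁ Ftrue x, ⋃ x ∈ S, P₂ Ftrue x) = Ftrue) :
    (⨅ p : {p : ℕ × (ℕ → Traj) //
        (∀ k, 1 ≤ k → k ≤ p.1 →
          p.2 k ∈ A (if k = 1 then x₀ else endp (p.2 (k - 1))) ∧
          rng (p.2 k) ∩ ICS ((FU P₁ P₂ U endp (P₁ Ftrue x₀, P₂ Ftrue x₀)
            ((List.range (k - 1)).map fun j => p.2 (j + 1))).1) = ∅) ∧
        (if p.1 = 0 then x₀ else endp (p.2 p.1)) ∈ Goal},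
      ∑ k ∈ Finset.Icc 1 p.1.1, c (p.1.2 k)) =
    (⨅ p : {p : ℕ × (ℕ → Traj) //
        (∀ k, 1 ≤ k → k ≤ p.1 →
          p.2 k ∈ A (if k = 1 then x₀ else endp (p.2 (k - 1))) ∧
          rng (p.2 k) ∩ ICS (⋃ j ∈ Finset.range k,
            P₁ Ftrue (if j = 0 then x₀ else endp (p.2 j))) = ∅) ∧
        (if p.1 = 0 then x₀ else endp (p.2 p.1)) ∈ Goal},
      ∑ k ∈ Finset.Icc 1 p.1.1, c (p.1.2 k)) := by
  have key : ∀ (σ : ℕ → Traj) (k : ℕ), 1 ≤ k →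
      (FU P₁ P₂ U endp (P₁ Ftrue x₀, P₂ Ftrue x₀)
        ((List.range (k - 1)).map fun j => σ (j + 1))).1 =
      ⋃ j ∈ Finset.range k, P₁ Ftrue (if j = 0 then x₀ else endp (σ j)) := by
    intro σ k hk
    rw [FU_key P₁ P₂ U endp Ftrue x₀ hU σ (k - 1)]
    rw [Nat.sub_add_cancel hk]
  apply le_antisymm
  · refine le_iInf fun p => ?_
    obtain ⟨⟨N, σ⟩, h1, h2⟩ := p
    refine iInf_le_of_le ⟨⟨N, σ⟩, fun k hk1 hk2 => ?_, h2⟩ le_rfl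
    obtain ⟨ha, hb⟩ := h1 k hk1 hk2
    exact ⟨ha, by rwa [key σ k hk1]⟩
  · refine le_iInf fun p => ?_
    obtain ⟨⟨N, σ⟩, h1, h2⟩ := p
    refine iInf_le_of_le ⟨⟨N, σ⟩, fun k hk1 hk2 => ?_, h2⟩ le_rfl
    obtain ⟨ha, hb⟩ := h1 k hk1 hk2
    exact ⟨ha, by rwa [← key σ k hk1]⟩
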